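/- Let φ : ℝ≥0 → ℝ≥0 be an Orlicz function satisfying Δ^{*p} for all arguments with constant K, i.e. φ(au) ≥ K a^p φ(u) for all a ≥ 1, u ≥ 0. Define r(u) = sup_{0 < t ≤ u} φ(t)/t^p and ψ(u) = ∫₀^u r(t) t^{p-1} dt. Then ψ is an Orlicz function equivalent to φ and u ↦ ψ(u^{1/p}) is convex. -/

import Mathlib

open Real MeasureTheory

theorem stmt_9 (φ : ℝ → ℝ) (p : ℝ) (hp : 0 < p)
    (hφ0 : φ 0 = 0) (hmono : StrictMonoOn φ (Set.Ici 0))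
    (hcont : ContinuousOn φ (Set.Ici 0))
    (htop : Filter.Tendsto φ Filter.atTop Filter.atTop)
    (K : ℝ) (hK : 0 < K)
    (hΔ : ∀ a ≥ (1:ℝ), ∀ u ≥ (0:ℝ), K * a ^ p * φ u ≤ φ (a * u))
    (r ψ : ℝ → ℝ)
    (hr : ∀ u > (0:ℝ), r u = sSup ((fun t => φ t / t ^ p) '' Set.Ioc 0 u))
    (hψ : ∀ u ≥ (0:ℝ), ψ u = ∫ t in (0:ℝ)..u, r t * t ^ (p - 1)) :
    (ψ 0 = 0 ∧ StrictMonoOn ψ (Set.Ici 0) ∧ ContinuousOn ψ (Set.Ici 0) ∧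
      Filter.Tendsto ψ Filter.atTop Filter.atTop) ∧
    (∃ K₁ ≥ (1:ℝ), ∃ K₂ ≥ (1:ℝ), ∀ u ≥ (0:ℝ),
      K₁⁻¹ * ψ (K₂⁻¹ * u) ≤ φ u ∧ φ u ≤ K₁ * ψ (K₂ * u)) ∧
    ConvexOn ℝ (Set.Ici 0) (fun u => ψ (u ^ (1 / p))) := by
  -- basic facts about φ
  have hφpos : ∀ t : ℝ, 0 < t → 0 < φ t := fun t ht => by
    have := hmono (Set.self_mem_Ici) (Set.mem_Ici.2 ht.le) ht
    rwa [hφ0] at this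
  have hφmono : MonotoneOn φ (Set.Ici 0) := hmono.monotoneOn
  have hφnonneg : ∀ t : ℝ, 0 ≤ t → 0 ≤ φ t := fun t ht => by
    have := hφmono Set.self_mem_Ici (Set.mem_Ici.2 ht) ht
    rwa [hφ0] at this
  -- the auxiliary function R (globally defined version of r)
  set R : ℝ → ℝ := fun u => sSup ((fun t => φ t / t ^ p) '' Set.Ioc 0 u) with hRdef
  -- key ratio comparison coming from the Δ condition
  have hratio : ∀ s t : ℝ, 0 < s → s ≤ t → φ s / s ^ p ≤ K⁻¹ * (φ t / t ^ p) := by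
    intro s t hs hst
    have ht : 0 < t := hs.trans_le hst
    have hsp : (0:ℝ) < s ^ p := Real.rpow_pos_of_pos hs p
    have htp : (0:ℝ) < t ^ p := Real.rpow_pos_of_pos ht p
    have h1 : (1:ℝ) ≤ t / s := (one_le_div hs).2 hst
    have h := hΔ (t / s) h1 s hs.le
    rw [div_mul_cancel₀ _ hs.ne'] at h
    rw [Real.div_rpow ht.le hs.le p] at h
    rw [inv_mul_eq_div, div_div, div_le_div_iff₀ hsp (by positivity)]
    have h2 := mul_le_mul_of_nonneg_right h hsp.le
    have hfin : K * (t ^ p / s ^ p) * φ s * s ^ p = φ s * (t ^ p * K) := by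
      field_simp
    rw [hfin] at h2
    exact h2
  have hbdd : ∀ t : ℝ, 0 < t → BddAbove ((fun s => φ s / s ^ p) '' Set.Ioc 0 t) := by
    intro t ht
    refine ⟨K⁻¹ * (φ t / t ^ p), ?_⟩
    rintro x ⟨s, hs, rfl⟩
    exact hratio s t hs.1 hs.2
  have hRle : ∀ t : ℝ, 0 < t → R t ≤ K⁻¹ * (φ t / t ^ p) := by
    intro t ht
    simp only [hRdef]
    refine csSup_le ⟨φ t / t ^ p, ⟨t, ⟨ht, le_rfl⟩, rfl⟩⟩ ?_
    rintro x ⟨s, hs, rfl⟩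
    exact hratio s t hs.1 hs.2
  have hRge : ∀ t : ℝ, 0 < t → φ t / t ^ p ≤ R t := fun t ht =>
    le_csSup (hbdd t ht) ⟨t, ⟨ht, le_rfl⟩, rfl⟩
  have hRpos : ∀ t : ℝ, 0 < t → 0 < R t := fun t ht =>
    lt_of_lt_of_le (div_pos (hφpos t ht) (Real.rpow_pos_of_pos ht p)) (hRge t ht)
  have hRzero : ∀ t : ℝ, t ≤ 0 → R t = 0 := by
    intro t ht
    have he : Set.Ioc (0:ℝ) t = ∅ := Set.Ioc_eq_empty (by intro h; linarith)
    simp [hRdef, he]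
  have hRnonneg : ∀ t : ℝ, 0 ≤ R t := by
    intro t
    rcases le_or_gt t 0 with h | h
    · rw [hRzero t h]
    · exact (hRpos t h).le
  have hRmono : Monotone R := by
    intro s t hst
    rcases le_or_gt s 0 with h | h
    · rw [hRzero s h]; exact hRnonneg t
    · exact csSup_le_csSup (hbdd t (h.trans_le hst)) ⟨φ s / s ^ p, ⟨s, ⟨h, le_rfl⟩, rfl⟩⟩
        (Set.image_mono (Set.Ioc_subset_Ioc_right hst))
  -- the integrand
  set g : ℝ → ℝ := fun t => R t * t ^ (p - 1) with hgdef
  have hgmeas : Measurable g := by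
    simp only [hgdef]
    exact hRmono.measurable.mul (by fun_prop)
  have hgint : ∀ a b : ℝ, 0 ≤ a → a ≤ b → IntervalIntegrable g volume a b := by
    intro a b ha hab
    have hmaj : IntervalIntegrable (fun t : ℝ => R b * t ^ (p - 1)) volume a b :=
      (intervalIntegral.intervalIntegrable_rpow' (by linarith)).const_mul _
    refine hmaj.mono_fun' (hgmeas.aestronglyMeasurable.restrict) ?_
    rw [Set.uIoc_of_le hab]
    refine (ae_restrict_iff' measurableSet_Ioc).2 (Filter.Eventually.of_forall ?_)
    intro t ht
    have ht0 : 0 < t := lt_of_le_of_lt ha ht.1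
    have h1 : 0 ≤ t ^ (p - 1) := Real.rpow_nonneg ht0.le _
    have h2 : 0 ≤ g t := mul_nonneg (hRnonneg t) h1
    show ‖g t‖ ≤ R b * t ^ (p - 1)
    rw [Real.norm_of_nonneg h2]
    exact mul_le_mul_of_nonneg_right (hRmono ht.2) h1
  have hpne : p - 1 + 1 = p := by ring
  have hint_rpow : ∀ a b : ℝ, (∫ t in a..b, t ^ (p - 1)) = (b ^ p - a ^ p) / p := by
    intro a b
    rw [integral_rpow (Or.inl (by linarith)), hpne]
  -- key integral bounds
  have hkey_ub : ∀ a b : ℝ, 0 ≤ a → a ≤ b → (∫ t in a..b, g t) ≤ R b * ((b ^ p - a ^ p) / p) := by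
    intro a b ha hab
    have h1 : (∫ t in a..b, g t) ≤ ∫ t in a..b, R b * t ^ (p - 1) := by
      apply intervalIntegral.integral_mono_on hab (hgint a b ha hab)
        ((intervalIntegral.intervalIntegrable_rpow' (by linarith)).const_mul _)
      intro t ht
      exact mul_le_mul_of_nonneg_right (hRmono ht.2)
        (Real.rpow_nonneg (le_trans ha ht.1) _)
    rwa [intervalIntegral.integral_const_mul, hint_rpow] at h1
  have hkey_lb : ∀ a b : ℝ, 0 ≤ a → a ≤ b → R a * ((b ^ p - a ^ p) / p) ≤ ∫ t in a..b, g t := by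
    intro a b ha hab
    have h1 : (∫ t in a..b, R a * t ^ (p - 1)) ≤ ∫ t in a..b, g t := by
      apply intervalIntegral.integral_mono_on hab
        ((intervalIntegral.intervalIntegrable_rpow' (by linarith)).const_mul _) (hgint a b ha hab)
      intro t ht
      exact mul_le_mul_of_nonneg_right (hRmono ht.1)
        (Real.rpow_nonneg (le_trans ha ht.1) _)
    rwa [intervalIntegral.integral_const_mul, hint_rpow] at h1
  -- the clean primitive ψ'
  set ψ' : ℝ → ℝ := fun u => ∫ t in (0:ℝ)..u, g t with hψ'def
  have hψeq : ∀ u : ℝ, 0 ≤ u → ψ u = ψ' u := by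
    intro u hu
    rw [hψ u hu]
    simp only [hψ'def]
    apply intervalIntegral.integral_congr_ae
    apply Filter.Eventually.of_forall
    intro x hx
    rw [Set.uIoc_of_le hu] at hx
    simp only [hgdef, hRdef]
    rw [hr x hx.1]
  have hadd : ∀ a b : ℝ, 0 ≤ a → a ≤ b → ψ' b - ψ' a = ∫ t in a..b, g t := by
    intro a b ha hab
    have h := intervalIntegral.integral_add_adjacent_intervals
      (hgint 0 a le_rfl ha) (hgint a b ha hab)
    simp only [hψ'def]
    linarith
  have hψ'0 : ψ' 0 = 0 := intervalIntegral.integral_same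
  have hψ'nonneg : ∀ u : ℝ, 0 ≤ u → 0 ≤ ψ' u := by
    intro u hu
    have h := hkey_lb 0 u le_rfl hu
    rw [hRzero 0 le_rfl, zero_mul] at h
    have h2 := hadd 0 u le_rfl hu
    rw [hψ'0] at h2
    linarith
  -- strict monotonicity of ψ'
  have hψ'smono : ∀ u v : ℝ, 0 ≤ u → u < v → ψ' u < ψ' v := by
    intro u v hu huv
    set m := (u + v) / 2 with hm
    have hum : u < m := by simp only [hm]; linarith
    have hmv : m < v := by simp only [hm]; linarith
    have hm0 : 0 < m := lt_of_le_of_lt hu hum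
    have h1 := hkey_lb u m hu hum.le
    have h2 := hkey_lb m v hm0.le hmv.le
    have hmp : m ^ p < v ^ p := Real.rpow_lt_rpow hm0.le hmv hp
    have hup : u ^ p ≤ m ^ p := Real.rpow_le_rpow hu hum.le hp.le
    have e1 := hadd u m hu hum.le
    have e2 := hadd m v hm0.le hmv.le
    have hpos : 0 < R m * ((v ^ p - m ^ p) / p) :=
      mul_pos (hRpos m hm0) (div_pos (by linarith) hp)
    have hnn : 0 ≤ R u * ((m ^ p - u ^ p) / p) :=
      mul_nonneg (hRnonneg u) (div_nonneg (by linarith) hp.le)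
    linarith
  -- upper and lower estimates of ψ' in terms of φ
  have hψ'ub : ∀ v : ℝ, 0 < v → ψ' v ≤ φ v / (p * K) := by
    intro v hv
    have h := hkey_ub 0 v le_rfl hv.le
    rw [Real.zero_rpow hp.ne'] at h
    have e := hadd 0 v le_rfl hv.le
    rw [hψ'0] at e
    have hvp : (0:ℝ) < v ^ p := Real.rpow_pos_of_pos hv p
    have h2 : R v * ((v ^ p - 0) / p) ≤ K⁻¹ * (φ v / v ^ p) * ((v ^ p - 0) / p) :=
      mul_le_mul_of_nonneg_right (hRle v hv) (div_nonneg (by linarith) hp.le)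
    have e2 : K⁻¹ * (φ v / v ^ p) * ((v ^ p - 0) / p) = φ v / (p * K) := by
      field_simp
      ring
    rw [e2] at h2
    linarith
  have h2p : (1:ℝ) < 2 ^ p :=
    (Real.one_lt_rpow_iff_of_pos two_pos).2 (Or.inl ⟨one_lt_two, hp⟩)
  have h2p0 : (0:ℝ) < 2 ^ p - 1 := by linarith
  have hψ'lb : ∀ u : ℝ, 0 ≤ u → φ u * ((2 ^ p - 1) / p) ≤ ψ' (2 * u) := by
    intro u hu
    rcases eq_or_lt_of_le hu with h | h
    · rw [← h, hφ0, zero_mul, mul_zero, hψ'0]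
    · have h2u : u < 2 * u := by linarith
      have e1 := hadd u (2 * u) hu h2u.le
      have h1 := hkey_lb u (2 * u) hu h2u.le
      have hmul : (2 * u) ^ p = 2 ^ p * u ^ p := Real.mul_rpow (by norm_num) h.le
      have hup : (0:ℝ) < u ^ p := Real.rpow_pos_of_pos h p
      have h3 : φ u / u ^ p * ((2 ^ p * u ^ p - u ^ p) / p) ≤
          R u * ((2 ^ p * u ^ p - u ^ p) / p) := by
        apply mul_le_mul_of_nonneg_right (hRge u h)
        apply div_nonneg _ hp.le
        nlinarith
      have e3 : φ u / u ^ p * ((2 ^ p * u ^ p - u ^ p) / p) = φ u * ((2 ^ p - 1) / p) := by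
        field_simp
      rw [hmul] at h1
      rw [e3] at h3
      have hn := hψ'nonneg u hu
      linarith
  -- ψ 0 = 0
  have hψ0 : ψ 0 = 0 := by rw [hψeq 0 le_rfl, hψ'0]
  -- the equivalence constants
  set C1 : ℝ := p / (2 ^ p - 1) with hC1
  set C2 : ℝ := 1 / (p * K) with hC2
  set K₁ : ℝ := max 1 (max C1 C2) with hK₁
  have hK₁1 : (1:ℝ) ≤ K₁ := le_max_left _ _
  have hK₁0 : (0:ℝ) < K₁ := lt_of_lt_of_le one_pos hK₁1
  have hK₁C1 : C1 ≤ K₁ := le_trans (le_max_left _ _) (le_max_right _ _)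
  have hK₁C2 : C2 ≤ K₁ := le_trans (le_max_right _ _) (le_max_right _ _)
  have hC1pos : 0 < C1 := by rw [hC1]; positivity
  have hC2pos : 0 < C2 := by rw [hC2]; positivity
  have hequiv : ∀ u ≥ (0:ℝ), K₁⁻¹ * ψ ((2:ℝ)⁻¹ * u) ≤ φ u ∧ φ u ≤ K₁ * ψ (2 * u) := by
    intro u hu
    constructor
    · rcases eq_or_lt_of_le hu with h | h
      · rw [← h, mul_zero, hψ0, mul_zero, hφ0]
      · have hu2 : (0:ℝ) < 2⁻¹ * u := by positivity
        rw [hψeq _ hu2.le]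
        have h1 : ψ' (2⁻¹ * u) ≤ φ (2⁻¹ * u) / (p * K) := hψ'ub _ hu2
        have h2 : φ (2⁻¹ * u) ≤ φ u :=
          hφmono (Set.mem_Ici.2 hu2.le) (Set.mem_Ici.2 hu) (by linarith)
        have h3 : ψ' (2⁻¹ * u) ≤ φ u / (p * K) := by
          refine le_trans h1 ?_
          gcongr
        have hKinv : K₁⁻¹ ≤ p * K := by
          have h4 := inv_anti₀ hC2pos hK₁C2
          rwa [hC2, one_div, inv_inv] at h4
        have s1 : K₁⁻¹ * ψ' (2⁻¹ * u) ≤ K₁⁻¹ * (φ u / (p * K)) :=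
          mul_le_mul_of_nonneg_left h3 (by positivity)
        have s2 : K₁⁻¹ * (φ u / (p * K)) ≤ (p * K) * (φ u / (p * K)) := by
          apply mul_le_mul_of_nonneg_right hKinv
          have := hφnonneg u hu
          positivity
        have s3 : (p * K) * (φ u / (p * K)) = φ u := by field_simp
        linarith
    · have h2u : (0:ℝ) ≤ 2 * u := by linarith
      rw [hψeq _ h2u]
      have h := hψ'lb u hu
      have s1 : C1 * (φ u * ((2 ^ p - 1) / p)) ≤ C1 * ψ' (2 * u) :=
        mul_le_mul_of_nonneg_left h hC1pos.le
      have s2 : C1 * (φ u * ((2 ^ p - 1) / p)) = φ u := by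
        rw [hC1]
        field_simp
      have s3 : C1 * ψ' (2 * u) ≤ K₁ * ψ' (2 * u) :=
        mul_le_mul_of_nonneg_right hK₁C1 (hψ'nonneg _ h2u)
      linarith
  -- strict monotonicity of ψ
  have hψsmono : StrictMonoOn ψ (Set.Ici 0) := by
    intro u hu v hv huv
    rw [hψeq u hu, hψeq v hv]
    exact hψ'smono u v hu huv
  -- continuity of ψ on Ici 0
  have hψcont : ContinuousOn ψ (Set.Ici 0) := by
    intro u hu
    have hu0 : (0:ℝ) ≤ u := hu
    have hint : IntervalIntegrable g volume 0 (u + 1) := hgint 0 (u + 1) le_rfl (by linarith)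
    have h1 : ContinuousOn ψ' (Set.uIcc 0 (u + 1)) := by
      simp only [hψ'def]
      exact intervalIntegral.continuousOn_primitive_interval' hint Set.left_mem_uIcc
    rw [Set.uIcc_of_le (by linarith : (0:ℝ) ≤ u + 1)] at h1
    have h2 : ContinuousOn ψ (Set.Icc 0 (u + 1)) :=
      h1.congr fun x hx => hψeq x hx.1
    have h3 : ContinuousWithinAt ψ (Set.Icc 0 (u + 1)) u := h2 u ⟨hu0, by linarith⟩
    apply h3.mono_of_mem_nhdsWithin
    rw [← Set.Ici_inter_Iic]
    exact Filter.inter_mem self_mem_nhdsWithin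
      (mem_nhdsWithin_of_mem_nhds (Iic_mem_nhds (by linarith)))
  -- ψ tends to infinity
  have hψtop : Filter.Tendsto ψ Filter.atTop Filter.atTop := by
    apply Filter.tendsto_atTop_mono' Filter.atTop
      (f₁ := fun v => φ (v / 2) * ((2 ^ p - 1) / p))
    · filter_upwards [Filter.eventually_ge_atTop (0:ℝ)] with v hv
      rw [hψeq v hv]
      have h := hψ'lb (v / 2) (by linarith)
      have e : 2 * (v / 2) = v := by ring
      rw [e] at h
      exact h
    · apply Filter.Tendsto.atTop_mul_const (div_pos h2p0 hp)
      exact htop.comp ((Filter.tendsto_id (α := ℝ)).atTop_div_const two_pos)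
  -- convexity of u ↦ ψ (u ^ (1/p))
  have hconv : ConvexOn ℝ (Set.Ici 0) (fun u => ψ (u ^ (1 / p))) := by
    apply convexOn_of_slope_mono_adjacent (convex_Ici 0)
    intro x y z hx hz hxy hyz
    have hx0 : (0:ℝ) ≤ x := hx
    have hy0 : (0:ℝ) ≤ y := le_trans hx0 hxy.le
    have hz0 : (0:ℝ) ≤ z := le_trans hy0 hyz.le
    have hpinv : (0:ℝ) < 1 / p := by positivity
    set a := x ^ (1 / p) with hadef
    set b := y ^ (1 / p) with hbdef
    set c := z ^ (1 / p) with hcdef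
    have ha0 : (0:ℝ) ≤ a := Real.rpow_nonneg hx0 _
    have hb0 : (0:ℝ) ≤ b := Real.rpow_nonneg hy0 _
    have hc0 : (0:ℝ) ≤ c := Real.rpow_nonneg hz0 _
    have hab : a ≤ b := Real.rpow_le_rpow hx0 hxy.le hpinv.le
    have hbc : b ≤ c := Real.rpow_le_rpow hy0 hyz.le hpinv.le
    have hap : a ^ p = x := by
      rw [hadef, one_div, Real.rpow_inv_rpow hx0 hp.ne']
    have hbp : b ^ p = y := by
      rw [hbdef, one_div, Real.rpow_inv_rpow hy0 hp.ne']
    have hcp : c ^ p = z := by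
      rw [hcdef, one_div, Real.rpow_inv_rpow hz0 hp.ne']
    rw [hψeq _ ha0, hψeq _ hb0, hψeq _ hc0]
    have e1 := hadd a b ha0 hab
    have e2 := hadd b c hb0 hbc
    have h1 := hkey_ub a b ha0 hab
    have h2 := hkey_lb b c hb0 hbc
    rw [hap, hbp] at h1
    rw [hbp, hcp] at h2
    rw [div_le_div_iff₀ (by linarith) (by linarith)]
    have h3 : (ψ' b - ψ' a) * (z - y) ≤ (R b * ((y - x) / p)) * (z - y) := by
      apply mul_le_mul_of_nonneg_right _ (by linarith)
      rw [e1]; exact h1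
    have h4 : (R b * ((z - y) / p)) * (y - x) ≤ (ψ' c - ψ' b) * (y - x) := by
      apply mul_le_mul_of_nonneg_right _ (by linarith)
      rw [e2]; exact h2
    have h5 : (R b * ((y - x) / p)) * (z - y) = (R b * ((z - y) / p)) * (y - x) := by
      ring
    linarith
  exact ⟨⟨hψ0, hψsmono, hψcont, hψtop⟩, ⟨K₁, hK₁1, 2, one_le_two, hequiv⟩, hconv⟩
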